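/- Let R be a commutative ℕ-graded connected Noetherian k-algebra and M a finitely generated ℕ-graded R-module. Then in ℤ[[t]] one has Hilb(M,t) = Hilb(R,t) · Σ_{i≥0} (-1)^i Hilb(Tor_i^R(M,k), t), where the alternating sum converges as a formal power series (each coefficient involves only finitely many terms). -/

import Mathlib

open DirectSum Finset

section RSide
variable {k : Type} [Field k] {R : Type} [CommRing R] [Algebra k R]
variable (𝒜 : ℕ → Submodule k R) [GradedAlgebra 𝒜]

lemma hs5_d0_mul (r s : R) :
    (DirectSum.decompose 𝒜 (r * s) 0 : R)
      = (DirectSum.decompose 𝒜 r 0 : R) * (DirectSum.decompose 𝒜 s 0 : R) := by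
  classical
  have h2 : ∑ j ∈ (DirectSum.decompose 𝒜 s).support,
      (DirectSum.decompose 𝒜 (r * (DirectSum.decompose 𝒜 s j : R)) 0 : R)
      = (DirectSum.decompose 𝒜 r 0 : R) * (DirectSum.decompose 𝒜 s 0 : R) := by
    have e1 : ∀ b ∈ (DirectSum.decompose 𝒜 s).support, b ≠ 0 →
        (DirectSum.decompose 𝒜 (r * (DirectSum.decompose 𝒜 s b : R)) 0 : R) = 0 := by
      intro b _ hb
      exact DirectSum.coe_decompose_mul_of_right_mem_of_not_le 𝒜
        (DirectSum.decompose 𝒜 s b).2 (fun h => hb (Nat.le_zero.mp h))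
    have e2 : 0 ∉ (DirectSum.decompose 𝒜 s).support →
        (DirectSum.decompose 𝒜 (r * (DirectSum.decompose 𝒜 s 0 : R)) 0 : R) = 0 := by
      intro h0
      rw [DFinsupp.notMem_support_iff] at h0
      rw [h0]; simp
    rw [Finset.sum_eq_single 0 e1 e2]
    simpa using DirectSum.coe_decompose_mul_of_right_mem_of_le 𝒜
      (a := r) (DirectSum.decompose 𝒜 s 0).2 (le_refl 0)
  calc (DirectSum.decompose 𝒜 (r * s) 0 : R)
      = (DirectSum.decompose 𝒜 (∑ j ∈ (DirectSum.decompose 𝒜 s).support,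
          r * (DirectSum.decompose 𝒜 s j : R)) 0 : R) := by
        rw [← Finset.mul_sum, DirectSum.sum_support_decompose 𝒜 s]
    _ = ∑ j ∈ (DirectSum.decompose 𝒜 s).support,
          (DirectSum.decompose 𝒜 (r * (DirectSum.decompose 𝒜 s j : R)) 0 : R) := by
        rw [DirectSum.decompose_sum, DFinsupp.finset_sum_apply,
          AddSubmonoidClass.coe_finset_sum]
    _ = _ := h2

/-- The irrelevant ideal: elements with vanishing degree-zero component. -/
def hs5Iplus : Ideal R where
  carrier := {r | (DirectSum.decompose 𝒜 r 0 : R) = 0}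
  add_mem' {a b} ha hb := by
    simp only [Set.mem_setOf_eq] at *
    rw [DirectSum.decompose_add, DirectSum.add_apply, Submodule.coe_add, ha, hb, add_zero]
  zero_mem' := by simp
  smul_mem' c x hx := by
    simp only [Set.mem_setOf_eq, smul_eq_mul] at *
    rw [hs5_d0_mul 𝒜 c x, hx, mul_zero]

lemma hs5_mem_Iplus_iff (r : R) : r ∈ hs5Iplus 𝒜 ↔ (DirectSum.decompose 𝒜 r 0 : R) = 0 :=
  Iff.rfl

lemma hs5_homog_mem_Iplus {r : R} {i : ℕ} (hr : r ∈ 𝒜 i) (hi : i ≠ 0) : r ∈ hs5Iplus 𝒜 :=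
  DirectSum.decompose_of_mem_ne 𝒜 hr hi

lemma hs5_sub_d0_mem (r : R) : r - (DirectSum.decompose 𝒜 r 0 : R) ∈ hs5Iplus 𝒜 := by
  rw [hs5_mem_Iplus_iff, DirectSum.decompose_sub, DirectSum.sub_apply, AddSubgroupClass.coe_sub,
    DirectSum.decompose_of_mem_same 𝒜 (DirectSum.decompose 𝒜 r 0).2, sub_self]

end RSide

section RSide2
variable {k : Type} [Field k] {R : Type} [CommRing R] [Algebra k R]
variable (𝒜 : ℕ → Submodule k R) [GradedAlgebra 𝒜]

lemma hs5_exists_homog_gen [IsNoetherianRing R] :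
    ∃ (s : Finset R) (dg : R → ℕ), (∀ x ∈ s, x ∈ 𝒜 (dg x) ∧ dg x ≠ 0) ∧
      (hs5Iplus 𝒜 : Ideal R) ≤ Ideal.span ↑s := by
  classical
  obtain ⟨T, hT⟩ := (IsNoetherian.noetherian (hs5Iplus 𝒜 : Ideal R))
  set S2 : Finset R := T.biUnion (fun t => (DirectSum.decompose 𝒜 t).support.image
    (fun i => (DirectSum.decompose 𝒜 t i : R))) with hS2def
  have hS2 : ∀ x ∈ S2, ∃ i, x ∈ 𝒜 i ∧ i ≠ 0 := by
    intro x hx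
    rw [hS2def, Finset.mem_biUnion] at hx
    obtain ⟨t, htT, hx⟩ := hx
    rw [Finset.mem_image] at hx
    obtain ⟨i, hi, rfl⟩ := hx
    refine ⟨i, (DirectSum.decompose 𝒜 t i).2, ?_⟩
    rintro rfl
    have ht : t ∈ hs5Iplus 𝒜 := by
      rw [← hT]; exact Submodule.subset_span htT
    rw [hs5_mem_Iplus_iff] at ht
    rw [DFinsupp.mem_support_iff] at hi
    exact hi (Subtype.ext ht)
  refine ⟨S2, fun x => if h : ∃ i, x ∈ 𝒜 i ∧ i ≠ 0 then h.choose else 1, ?_, ?_⟩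
  · intro x hx
    have h := hS2 x hx
    simp only [dif_pos h]
    exact h.choose_spec
  · rw [← hT, Submodule.span_le]
    intro t htT
    have : t = ∑ i ∈ (DirectSum.decompose 𝒜 t).support, (DirectSum.decompose 𝒜 t i : R) :=
      (DirectSum.sum_support_decompose 𝒜 t).symm
    rw [this]
    refine Submodule.sum_mem _ (fun i hi => Submodule.subset_span ?_)
    rw [hS2def]
    simp only [Finset.coe_biUnion, Set.mem_iUnion, Finset.coe_image, Set.mem_image]
    exact ⟨t, htT, i, hi, rfl⟩

lemma hs5_findim [IsNoetherianRing R]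
    (hconn : ∀ r ∈ 𝒜 0, ∃ c : k, r = algebraMap k R c) (p : ℕ) :
    FiniteDimensional k (𝒜 p) := by
  classical
  obtain ⟨s, dg, hdg, hle⟩ := hs5_exists_homog_gen 𝒜
  induction p using Nat.strong_induction_on with
  | _ p IH =>
    by_cases hp : p = 0
    · subst hp
      have hle1 : 𝒜 0 ≤ Submodule.span k ({1} : Set R) := by
        intro r hr
        obtain ⟨c, rfl⟩ := hconn r hr
        rw [Algebra.algebraMap_eq_smul_one]
        exact Submodule.smul_mem _ _ (Submodule.subset_span rfl)
      haveI : FiniteDimensional k (Submodule.span k ({1} : Set R)) :=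
        FiniteDimensional.span_of_finite k (Set.finite_singleton 1)
      exact Submodule.finiteDimensional_of_le hle1
    · set F : Submodule k R :=
        s.sup (fun x => Submodule.map (LinearMap.mulRight k x) (𝒜 (p - dg x))) with hF
      have hsub : 𝒜 p ≤ F := by
        intro r hr
        have hrI : r ∈ hs5Iplus 𝒜 := hs5_homog_mem_Iplus 𝒜 hr hp
        have hrs := hle hrI
        rw [Ideal.span] at hrs
        obtain ⟨f, -, hf⟩ := Submodule.mem_span_finset.mp hrs
        have hr2 : r = ∑ x ∈ s, (DirectSum.decompose 𝒜 (f x * x) p : R) := by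
          have : r = (DirectSum.decompose 𝒜 (∑ x ∈ s, f x * x) p : R) := by
            rw [show ∑ x ∈ s, f x * x = r from hf]
            rw [DirectSum.decompose_of_mem_same 𝒜 hr]
          rw [this, DirectSum.decompose_sum, DFinsupp.finset_sum_apply,
            AddSubmonoidClass.coe_finset_sum]
        rw [hr2]
        refine Submodule.sum_mem _ (fun x hx => ?_)
        rw [DirectSum.coe_decompose_mul_of_right_mem 𝒜 p (hdg x hx).1]
        split_ifs with hcase
        · refine Finset.le_sup (f := fun x => Submodule.map (LinearMap.mulRight k x)
            (𝒜 (p - dg x))) hx ?_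
          exact ⟨(DirectSum.decompose 𝒜 (f x) (p - dg x) : R),
            (DirectSum.decompose 𝒜 (f x) (p - dg x)).2, rfl⟩
        · exact Submodule.zero_mem _
      haveI hFD : FiniteDimensional k F := by
        rw [hF]
        refine Finset.sup_induction (p := fun N : Submodule k R => FiniteDimensional k N)
          inferInstance (fun a ha b hb => ?_) (fun x hx => ?_)
        · exact @Submodule.finiteDimensional_sup k R _ _ _ a b ha hb
        · haveI : FiniteDimensional k (𝒜 (p - dg x)) :=
            IH (p - dg x) (by have := (hdg x hx).2; omega)
          exact Module.Finite.map _ _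
      exact Submodule.finiteDimensional_of_le hsub

end RSide2

section VSide
variable {k : Type} [Field k] {R : Type} [CommRing R] [Algebra k R]
variable (𝒜 : ℕ → Submodule k R) [GradedAlgebra 𝒜]
variable {V : Type} [AddCommGroup V] [Module k V] [Module R V] [IsScalarTower k R V]
variable (𝒱 : ℕ → Submodule k V) [DirectSum.Decomposition 𝒱]

lemma hs5_pi_smul
    (hsm : ∀ (i j : ℕ) (r : R) (v : V), r ∈ 𝒜 i → v ∈ 𝒱 j → r • v ∈ 𝒱 (i + j))
    (r : R) (v : V) (d : ℕ) :
    (DirectSum.decompose 𝒱 (r • v) d : V)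
      = ∑ c ∈ Finset.range (d + 1),
          (DirectSum.decompose 𝒜 r c : R) • (DirectSum.decompose 𝒱 v (d - c) : V) := by
  classical
  induction v using DirectSum.Decomposition.inductionOn 𝒱 with
  | zero => simp
  | add v w hv hw =>
      rw [smul_add, DirectSum.decompose_add, DirectSum.add_apply, Submodule.coe_add, hv, hw,
        ← Finset.sum_add_distrib]
      refine Finset.sum_congr rfl (fun c _ => ?_)
      rw [DirectSum.decompose_add, DirectSum.add_apply, Submodule.coe_add, smul_add]
  | homogeneous m =>
      obtain ⟨v, hv⟩ := m
      rename_i D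
      -- both sides equal `if D ≤ d then (decompose 𝒜 r (d - D) : R) • v else 0`
      have lhs_eq : (DirectSum.decompose 𝒱 (r • v) d : V)
          = if D ≤ d then (DirectSum.decompose 𝒜 r (d - D) : R) • v else 0 := by
        conv_lhs => rw [← DirectSum.sum_support_decompose 𝒜 r, Finset.sum_smul,
          DirectSum.decompose_sum]
        rw [DFinsupp.finset_sum_apply, AddSubmonoidClass.coe_finset_sum]
        have hterm : ∀ c ∈ (DirectSum.decompose 𝒜 r).support,
            (DirectSum.decompose 𝒱 ((DirectSum.decompose 𝒜 r c : R) • v) d : V)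
              = if c = d - D ∧ D ≤ d then (DirectSum.decompose 𝒜 r c : R) • v else 0 := by
          intro c _
          have hmem := hsm c D _ _ (DirectSum.decompose 𝒜 r c).2 hv
          by_cases hcd : c + D = d
          · rw [if_pos (by omega)]
            exact DirectSum.decompose_of_mem_same 𝒱 (by rwa [hcd] at hmem)
          · rw [if_neg (by omega)]
            exact DirectSum.decompose_of_mem_ne 𝒱 hmem hcd
        rw [Finset.sum_congr rfl hterm]
        by_cases hDd : D ≤ d
        · simp only [hDd, and_true]
          rw [Finset.sum_ite_eq' (DirectSum.decompose 𝒜 r).support (d - D)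
            (fun c => (DirectSum.decompose 𝒜 r c : R) • v)]
          rw [if_pos trivial]
          split_ifs with hsupp
          · rfl
          · rw [DFinsupp.notMem_support_iff] at hsupp
            rw [hsupp]
            simp
        · rw [if_neg hDd]
          refine Finset.sum_eq_zero (fun c _ => ?_)
          rw [if_neg (by omega)]
      have rhs_eq : ∑ c ∈ Finset.range (d + 1),
          (DirectSum.decompose 𝒜 r c : R) • (DirectSum.decompose 𝒱 v (d - c) : V)
          = if D ≤ d then (DirectSum.decompose 𝒜 r (d - D) : R) • v else 0 := by
        have hterm : ∀ c ∈ Finset.range (d + 1),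
            (DirectSum.decompose 𝒜 r c : R) • (DirectSum.decompose 𝒱 v (d - c) : V)
              = if c = d - D ∧ D ≤ d then (DirectSum.decompose 𝒜 r c : R) • v else 0 := by
          intro c hc
          rw [Finset.mem_range] at hc
          by_cases hcd : d - c = D
          · rw [DirectSum.decompose_of_mem_same 𝒱 (hcd ▸ hv), if_pos (by omega)]
          · rw [DirectSum.decompose_of_mem_ne 𝒱 hv (fun h => hcd h.symm), if_neg (by omega),
              smul_zero]
        rw [Finset.sum_congr rfl hterm]
        by_cases hDd : D ≤ d
        · simp only [hDd, and_true]
          rw [Finset.sum_ite_eq' (Finset.range (d + 1)) (d - D)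
            (fun c => (DirectSum.decompose 𝒜 r c : R) • v)]
          rw [if_pos (Finset.mem_range.mpr (by omega : d - D < d + 1)), if_pos trivial]
        · rw [if_neg hDd]
          refine Finset.sum_eq_zero (fun c _ => ?_)
          rw [if_neg (by omega)]
      rw [lhs_eq, rhs_eq]

lemma hs5_span_homog_stable
    (hsm : ∀ (i j : ℕ) (r : R) (v : V), r ∈ 𝒜 i → v ∈ 𝒱 j → r • v ∈ 𝒱 (i + j))
    (S : Set V) (hS : ∀ x ∈ S, ∃ D, x ∈ 𝒱 D) :
    ∀ v ∈ Submodule.span R S, ∀ d, (DirectSum.decompose 𝒱 v d : V) ∈ Submodule.span R S := by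
  intro v hv
  induction hv using Submodule.span_induction with
  | mem x hx =>
      intro d
      obtain ⟨D, hD⟩ := hS x hx
      by_cases hdD : d = D
      · subst hdD
        rw [DirectSum.decompose_of_mem_same 𝒱 hD]
        exact Submodule.subset_span hx
      · rw [DirectSum.decompose_of_mem_ne 𝒱 hD (fun h => hdD h.symm)]
        exact Submodule.zero_mem _
  | zero => intro d; simp
  | add x y _ _ hx hy =>
      intro d
      rw [DirectSum.decompose_add, DirectSum.add_apply, Submodule.coe_add]
      exact Submodule.add_mem _ (hx d) (hy d)
  | smul r x _ hx =>
      intro d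
      rw [hs5_pi_smul 𝒜 𝒱 hsm]
      exact Submodule.sum_mem _ (fun c _ => Submodule.smul_mem _ _ (hx (d - c)))

end VSide

section GEN
variable {k : Type} [Field k] {R : Type} [CommRing R] [Algebra k R]
variable (𝒜 : ℕ → Submodule k R) [GradedAlgebra 𝒜]
variable {V : Type} [AddCommGroup V] [Module k V] [Module R V] [IsScalarTower k R V]
variable (𝒱 : ℕ → Submodule k V) [DirectSum.Decomposition 𝒱]

set_option maxHeartbeats 1000000 in
lemma hs5_GEN
    (hconn : ∀ r ∈ 𝒜 0, ∃ c : k, r = algebraMap k R c)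
    (hsm : ∀ (i j : ℕ) (r : R) (v : V), r ∈ 𝒜 i → v ∈ 𝒱 j → r • v ∈ 𝒱 (i + j))
    (K : Submodule R V) (hKfg : K.FG)
    (hKgr : ∀ v ∈ K, ∀ N, (DirectSum.decompose 𝒱 v N : V) ∈ K) :
    ∃ (n : ℕ) (e : Fin n → ℕ) (g : Fin n → V),
      Submodule.span R (Set.range g) = K ∧
      (∀ j, g j ∈ 𝒱 (e j)) ∧ (∀ j, g j ≠ 0) ∧
      (∀ v : Fin n → R, (∑ j, v j • g j) = 0 →
        ∀ j, (DirectSum.decompose 𝒜 (v j) 0 : R) = 0) := by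
  classical
  obtain ⟨T, hT⟩ := hKfg
  set S : Finset V := T.biUnion (fun t => (DirectSum.decompose 𝒱 t).support.image
    (fun N => (DirectSum.decompose 𝒱 t N : V))) with hSdef
  have hTK : ∀ t ∈ T, (t : V) ∈ K := fun t ht => hT ▸ Submodule.subset_span ht
  have hSmem : ∀ x ∈ S, x ∈ K ∧ ∃ N, x ∈ 𝒱 N := by
    intro x hx
    rw [hSdef, Finset.mem_biUnion] at hx
    obtain ⟨t, htT, hx⟩ := hx
    rw [Finset.mem_image] at hx
    obtain ⟨N, hN, rfl⟩ := hx
    exact ⟨hKgr t (hTK t htT) N, N, (DirectSum.decompose 𝒱 t N).2⟩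
  have hspanS : Submodule.span R (S : Set V) = K := by
    apply le_antisymm
    · rw [Submodule.span_le]; exact fun x hx => (hSmem x hx).1
    · rw [← hT, Submodule.span_le]
      intro t ht
      have ht2 : t = ∑ N ∈ (DirectSum.decompose 𝒱 t).support, (DirectSum.decompose 𝒱 t N : V) :=
        (DirectSum.sum_support_decompose 𝒱 t).symm
      rw [SetLike.mem_coe, ht2]
      refine Submodule.sum_mem _ (fun N hN => Submodule.subset_span ?_)
      rw [hSdef]
      simp only [Finset.coe_biUnion, Set.mem_iUnion, Finset.coe_image, Set.mem_image]
      exact ⟨t, ht, N, hN, rfl⟩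
  set S' : Finset V := S.filter (fun x => x ≠ 0) with hS'def
  have hS'S : ∀ x ∈ S', x ∈ S := fun x hx => (Finset.mem_filter.mp hx).1
  have hspanS' : Submodule.span R (S' : Set V) = K := by
    apply le_antisymm
    · rw [Submodule.span_le]; exact fun x hx => (hSmem x (hS'S x hx)).1
    · rw [← hspanS, Submodule.span_le]
      intro x hx
      by_cases hx0 : x = 0
      · subst hx0; exact Submodule.zero_mem _
      · exact Submodule.subset_span (by rw [hS'def]; exact Finset.mem_filter.mpr ⟨hx, hx0⟩)
  set IK : Submodule R V := (hs5Iplus 𝒜) • K with hIKdef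
  set mk : V →ₗ[R] (V ⧸ IK) := IK.mkQ with hmkdef
  have hker : LinearMap.ker mk = IK := Submodule.ker_mkQ IK
  have key0 : ∀ (r : R) (w : V), w ∈ K → ∃ c : k,
      algebraMap k R c = (DirectSum.decompose 𝒜 r 0 : R) ∧ mk (r • w) = c • mk w := by
    intro r w hw
    obtain ⟨c, hc⟩ := hconn (DirectSum.decompose 𝒜 r 0 : R) (DirectSum.decompose 𝒜 r 0).2
    refine ⟨c, hc.symm, ?_⟩
    have h1 : r • w - algebraMap k R c • w ∈ IK := by
      rw [← sub_smul, hIKdef]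
      refine Submodule.smul_mem_smul ?_ hw
      rw [← hc]
      exact hs5_sub_d0_mem 𝒜 r
    have h2 : mk (r • w - algebraMap k R c • w) = 0 := by
      rw [← LinearMap.mem_ker, hker]; exact h1
    rw [map_sub, sub_eq_zero] at h2
    rw [h2, map_smul, algebraMap_smul]
  set Kbar : Submodule k (V ⧸ IK) := Submodule.span k (mk '' (S' : Set V)) with hKbardef
  have stab : ∀ q ∈ Kbar, ∀ r : R, r • q ∈ Kbar := by
    intro q hq
    induction hq using Submodule.span_induction with
    | mem x hx =>
        intro r
        obtain ⟨y, hy, rfl⟩ := hx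
        obtain ⟨c, _, hc2⟩ := key0 r y (hSmem y (hS'S y hy)).1
        rw [← map_smul, hc2]
        exact Submodule.smul_mem _ _ (Submodule.subset_span ⟨y, hy, rfl⟩)
    | zero => intro r; rw [smul_zero]; exact Submodule.zero_mem _
    | add x y _ _ hx hy => intro r; rw [smul_add]; exact Submodule.add_mem _ (hx r) (hy r)
    | smul c x _ hx =>
        intro r
        rw [smul_comm]
        exact Submodule.smul_mem _ _ (hx r)
  have memb : ∀ v ∈ K, mk v ∈ Kbar := by
    intro v hv
    rw [← hspanS'] at hv
    induction hv using Submodule.span_induction with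
    | mem x hx => exact Submodule.subset_span ⟨x, hx, rfl⟩
    | zero => rw [map_zero]; exact Submodule.zero_mem _
    | add x y _ _ hx hy => rw [map_add]; exact Submodule.add_mem _ hx hy
    | smul r x _ hx => rw [map_smul]; exact stab _ hx r
  obtain ⟨t, hts, htspan, htind⟩ := exists_linearIndependent k (mk '' (S' : Set V))
  have htfin : t.Finite := (S'.finite_toSet.image mk).subset hts
  set tf : Finset (V ⧸ IK) := htfin.toFinset with htfdef
  set q : Fin tf.card → (V ⧸ IK) := fun j => (tf.equivFin.symm j : V ⧸ IK) with hqdef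
  have hqmem : ∀ j, q j ∈ t := fun j => htfin.mem_toFinset.mp (tf.equivFin.symm j).2
  have hqind : LinearIndependent k q := by
    have hinj : Function.Injective (fun j => (⟨q j, hqmem j⟩ : t)) := by
      intro a b hab
      have h2 : q a = q b := by
        have h3 := congrArg (fun x : t => (x : V ⧸ IK)) hab
        simpa using h3
      exact tf.equivFin.symm.injective (Subtype.ext h2)
    exact htind.comp _ hinj
  have hrangeq : Set.range q = t := by
    ext y
    constructor
    · rintro ⟨j, rfl⟩; exact hqmem j
    · intro hy
      obtain ⟨j, hj⟩ := tf.equivFin.symm.surjective ⟨y, htfin.mem_toFinset.mpr hy⟩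
      refine ⟨j, ?_⟩
      show (tf.equivFin.symm j : V ⧸ IK) = y
      rw [hj]
  have hchoice : ∀ j, ∃ x, x ∈ S' ∧ mk x = q j := by
    intro j
    obtain ⟨x, hx, hxe⟩ := hts (hqmem j)
    exact ⟨x, hx, hxe⟩
  choose g hgS' hgmk using hchoice
  have hgK : ∀ j, g j ∈ K := fun j => (hSmem _ (hS'S _ (hgS' j))).1
  have hgne : ∀ j, g j ≠ 0 := fun j => (Finset.mem_filter.mp (hgS' j)).2
  have hghom : ∀ j, ∃ N, g j ∈ 𝒱 N := fun j => (hSmem _ (hS'S _ (hgS' j))).2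
  choose e he using hghom
  set NN : Submodule R V := Submodule.span R (Set.range g) with hNNdef
  have hNNK : NN ≤ K := by
    rw [hNNdef, Submodule.span_le]
    rintro x ⟨j, rfl⟩
    exact hgK j
  have hmemb2 : ∀ v ∈ K, ∃ c : Fin tf.card → k, ∑ j, c j • q j = mk v := by
    intro v hv
    have h1 : mk v ∈ Submodule.span k t := by rw [htspan]; exact memb v hv
    rw [← hrangeq] at h1
    exact (Submodule.mem_span_range_iff_exists_fun k).mp h1
  have hNak : ∀ d, ∀ v ∈ K, v ∈ 𝒱 d → v ∈ NN := by
    intro d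
    induction d using Nat.strong_induction_on with
    | _ d IH =>
      intro v hvK hvd
      obtain ⟨c, hc⟩ := hmemb2 v hvK
      set w : V := ∑ j, algebraMap k R (c j) • g j with hwdef
      have hwK : w ∈ K := Submodule.sum_mem _ (fun j _ => Submodule.smul_mem _ _ (hgK j))
      have hwNN : w ∈ NN :=
        Submodule.sum_mem _ (fun j _ => Submodule.smul_mem _ _
          (Submodule.subset_span (Set.mem_range_self j)))
      have hmkw : mk w = ∑ j, c j • q j := by
        rw [hwdef, map_sum]
        refine Finset.sum_congr rfl (fun j _ => ?_)
        rw [map_smul, algebraMap_smul, hgmk]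
      have hvw : v - w ∈ IK := by
        rw [← hker, LinearMap.mem_ker, map_sub, hmkw, hc, sub_self]
      have hsplit : v = (DirectSum.decompose 𝒱 w d : V) + (DirectSum.decompose 𝒱 (v - w) d : V) := by
        have h3 : (DirectSum.decompose 𝒱 v d : V)
            = (DirectSum.decompose 𝒱 w d : V) + (DirectSum.decompose 𝒱 (v - w) d : V) := by
          conv_lhs => rw [show v = w + (v - w) by abel]
          rw [DirectSum.decompose_add, DirectSum.add_apply, Submodule.coe_add]
        rw [← h3, DirectSum.decompose_of_mem_same 𝒱 hvd]
      have h4 : (DirectSum.decompose 𝒱 w d : V) ∈ NN := by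
        refine hs5_span_homog_stable 𝒜 𝒱 hsm (Set.range g) ?_ w hwNN d
        rintro x ⟨j, rfl⟩
        exact ⟨e j, he j⟩
      have h5 : (DirectSum.decompose 𝒱 (v - w) d : V) ∈ NN := by
        refine Submodule.smul_induction_on hvw (fun r hr u hu => ?_) (fun x y hx hy => ?_)
        · rw [hs5_pi_smul 𝒜 𝒱 hsm]
          refine Submodule.sum_mem _ (fun c' hc' => ?_)
          by_cases hc0 : c' = 0
          · subst hc0
            rw [hs5_mem_Iplus_iff] at hr
            rw [hr, zero_smul]
            exact Submodule.zero_mem _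
          · rw [Finset.mem_range] at hc'
            refine Submodule.smul_mem _ _ ?_
            exact IH (d - c') (by omega) _ (hKgr u hu (d - c'))
              (DirectSum.decompose 𝒱 u (d - c')).2
        · rw [DirectSum.decompose_add, DirectSum.add_apply, Submodule.coe_add]
          exact Submodule.add_mem _ hx hy
      rw [hsplit]
      exact Submodule.add_mem _ h4 h5
  have hKNN : K ≤ NN := by
    intro v hv
    have h6 : v = ∑ N ∈ (DirectSum.decompose 𝒱 v).support, (DirectSum.decompose 𝒱 v N : V) :=
      (DirectSum.sum_support_decompose 𝒱 v).symm
    rw [h6]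
    exact Submodule.sum_mem _
      (fun N _ => hNak N _ (hKgr v hv N) (DirectSum.decompose 𝒱 v N).2)
  refine ⟨tf.card, e, g, le_antisymm hNNK hKNN, he, hgne, ?_⟩
  intro v hrel j
  have hc : ∀ j, ∃ c : k, algebraMap k R c = (DirectSum.decompose 𝒜 (v j) 0 : R) ∧
      mk ((v j) • g j) = c • mk (g j) := fun j => key0 (v j) (g j) (hgK j)
  choose cc hcc1 hcc2 using hc
  have hsum : ∑ j, cc j • q j = 0 := by
    have : mk (∑ j, (v j) • g j) = 0 := by rw [hrel, map_zero]
    rw [map_sum] at this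
    rw [← this]
    exact Finset.sum_congr rfl (fun j _ => by rw [hcc2 j, hgmk])
  have hz := Fintype.linearIndependent_iff.mp hqind cc hsum j
  rw [← hcc1 j, hz, map_zero]
end GEN

section Free
variable {k : Type} [Field k] {R : Type} [CommRing R] [Algebra k R]
variable (𝒜 : ℕ → Submodule k R) [GradedAlgebra 𝒜]

/-- Shifted grading of `R`. -/
def hs5AS (d N : ℕ) : Submodule k R := if d ≤ N then 𝒜 (N - d) else ⊥

/-- The grading of a free module with generators in degrees `e`. -/
def hs5gp {n : ℕ} (e : Fin n → ℕ) (N : ℕ) : Submodule k (Fin n → R) :=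
  Submodule.pi Set.univ (fun l => hs5AS 𝒜 (e l) N)

lemma hs5_mem_gp_iff {n : ℕ} (e : Fin n → ℕ) (N : ℕ) (v : Fin n → R) :
    v ∈ hs5gp 𝒜 e N ↔ ∀ l, v l ∈ hs5AS 𝒜 (e l) N := by
  constructor
  · intro h l; exact h l (Set.mem_univ l)
  · intro h l _; exact h l

lemma hs5_mem_AS_of_le {d N : ℕ} (h : d ≤ N) {x : R} :
    x ∈ hs5AS 𝒜 d N ↔ x ∈ 𝒜 (N - d) := by rw [hs5AS, if_pos h]

lemma hs5_mem_AS_of_not_le {d N : ℕ} (h : ¬ d ≤ N) {x : R} :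
    x ∈ hs5AS 𝒜 d N ↔ x = 0 := by rw [hs5AS, if_neg h]; exact Submodule.mem_bot k

/-- Degree-`m` projection of `R`, as a `k`-linear map. -/
noncomputable def hs5prR (m : ℕ) : R →ₗ[k] R :=
  (𝒜 m).subtype ∘ₗ (DirectSum.component k ℕ (fun i => 𝒜 i) m) ∘ₗ
    (DirectSum.decomposeLinearEquiv 𝒜).toLinearMap

lemma hs5prR_apply (m : ℕ) (r : R) : hs5prR 𝒜 m r = (DirectSum.decompose 𝒜 r m : R) := rfl

/-- Degree-`N` projection of the graded free module. -/
noncomputable def hs5piF {n : ℕ} (e : Fin n → ℕ) (N : ℕ) :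
    (Fin n → R) →ₗ[k] (Fin n → R) :=
  LinearMap.pi (fun l => (if e l ≤ N then hs5prR 𝒜 (N - e l) else 0) ∘ₗ LinearMap.proj l)

lemma hs5piF_apply {n : ℕ} (e : Fin n → ℕ) (N : ℕ) (v : Fin n → R) (l : Fin n) :
    hs5piF 𝒜 e N v l
      = if e l ≤ N then (DirectSum.decompose 𝒜 (v l) (N - e l) : R) else 0 := by
  by_cases h : e l ≤ N <;>
    simp [hs5piF, h, hs5prR_apply, LinearMap.pi_apply]

lemma hs5piF_mem {n : ℕ} (e : Fin n → ℕ) (N : ℕ) (v : Fin n → R) :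
    hs5piF 𝒜 e N v ∈ hs5gp 𝒜 e N := by
  rw [hs5_mem_gp_iff]
  intro l
  rw [hs5piF_apply]
  by_cases h : e l ≤ N
  · rw [if_pos h, hs5_mem_AS_of_le 𝒜 h]
    exact (DirectSum.decompose 𝒜 (v l) (N - e l)).2
  · rw [if_neg h, hs5_mem_AS_of_not_le 𝒜 h]

lemma hs5piF_eq_self {n : ℕ} (e : Fin n → ℕ) {N : ℕ} {v : Fin n → R}
    (hv : v ∈ hs5gp 𝒜 e N) : hs5piF 𝒜 e N v = v := by
  funext l
  rw [hs5piF_apply]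
  have hl := (hs5_mem_gp_iff 𝒜 e N v).mp hv l
  by_cases h : e l ≤ N
  · rw [if_pos h]
    exact DirectSum.decompose_of_mem_same 𝒜 ((hs5_mem_AS_of_le 𝒜 h).mp hl)
  · rw [if_neg h]
    exact ((hs5_mem_AS_of_not_le 𝒜 h).mp hl).symm

lemma hs5piF_eq_zero {n : ℕ} (e : Fin n → ℕ) {N D : ℕ} {v : Fin n → R}
    (hv : v ∈ hs5gp 𝒜 e D) (hND : N ≠ D) : hs5piF 𝒜 e N v = 0 := by
  funext l
  rw [hs5piF_apply]
  have hl := (hs5_mem_gp_iff 𝒜 e D v).mp hv l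
  by_cases hD : e l ≤ D
  · have hl2 := (hs5_mem_AS_of_le 𝒜 hD).mp hl
    by_cases h : e l ≤ N
    · rw [if_pos h]
      exact DirectSum.decompose_of_mem_ne 𝒜 hl2 (by omega)
    · rw [if_neg h]; rfl
  · have hl2 := (hs5_mem_AS_of_not_le 𝒜 hD).mp hl
    by_cases h : e l ≤ N
    · rw [if_pos h, hl2]
      simp
    · rw [if_neg h]; rfl

open scoped Classical in
/-- The set of degrees occurring in `v`. -/
noncomputable def hs5Sv {n : ℕ} (e : Fin n → ℕ) (v : Fin n → R) : Finset ℕ :=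
  Finset.univ.biUnion (fun l => (DirectSum.decompose 𝒜 (v l)).support.image (· + e l))

lemma hs5piF_eq_zero_of_not_mem_Sv {n : ℕ} (e : Fin n → ℕ) {N : ℕ} {v : Fin n → R}
    (hN : N ∉ hs5Sv 𝒜 e v) : hs5piF 𝒜 e N v = 0 := by
  classical
  funext l
  rw [hs5piF_apply]
  by_cases h : e l ≤ N
  · rw [if_pos h]
    have h2 : N - e l ∉ (DirectSum.decompose 𝒜 (v l)).support := by
      intro hc
      refine hN ?_
      rw [hs5Sv, Finset.mem_biUnion]
      refine ⟨l, Finset.mem_univ l, ?_⟩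
      rw [Finset.mem_image]
      exact ⟨N - e l, by convert hc, by omega⟩
    rw [DFinsupp.notMem_support_iff] at h2
    rw [h2]; rfl
  · rw [if_neg h]; rfl

lemma hs5_sum_Sv {n : ℕ} (e : Fin n → ℕ) (v : Fin n → R) :
    ∑ N ∈ hs5Sv 𝒜 e v, hs5piF 𝒜 e N v = v := by
  classical
  funext l
  rw [Finset.sum_apply]
  have hterm : ∀ N ∈ hs5Sv 𝒜 e v, hs5piF 𝒜 e N v l
      = if e l ≤ N then (DirectSum.decompose 𝒜 (v l) (N - e l) : R) else 0 :=
    fun N _ => hs5piF_apply 𝒜 e N v l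
  rw [Finset.sum_congr rfl hterm, Finset.sum_ite, Finset.sum_const_zero, add_zero]
  have hsub : ((DirectSum.decompose 𝒜 (v l)).support.image (· + e l))
      ⊆ (hs5Sv 𝒜 e v).filter (fun N => e l ≤ N) := by
    intro N hN
    rw [Finset.mem_image] at hN
    obtain ⟨d, hd, rfl⟩ := hN
    refine Finset.mem_filter.mpr ⟨?_, by omega⟩
    rw [hs5Sv, Finset.mem_biUnion]
    exact ⟨l, Finset.mem_univ l, Finset.mem_image.mpr ⟨d, by convert hd, rfl⟩⟩
  have hvan : ∀ N ∈ (hs5Sv 𝒜 e v).filter (fun N => e l ≤ N),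
      N ∉ (DirectSum.decompose 𝒜 (v l)).support.image (· + e l) →
      (DirectSum.decompose 𝒜 (v l) (N - e l) : R) = 0 := by
    intro N hN hN2
    have h : e l ≤ N := (Finset.mem_filter.mp hN).2
    have h2 : N - e l ∉ (DirectSum.decompose 𝒜 (v l)).support := by
      intro hc
      exact hN2 (Finset.mem_image.mpr ⟨N - e l, hc, by omega⟩)
    rw [DFinsupp.notMem_support_iff] at h2
    rw [h2]; rfl
  rw [← Finset.sum_subset hsub hvan]
  rw [Finset.sum_image (by intro a _ b _ h; simp only at h; omega)]
  have : ∀ d ∈ (DirectSum.decompose 𝒜 (v l)).support,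
      (DirectSum.decompose 𝒜 (v l) (d + e l - e l) : R)
        = (DirectSum.decompose 𝒜 (v l) d : R) := by
    intro d _
    rw [Nat.add_sub_cancel]
  rw [Finset.sum_congr rfl this]
  exact DirectSum.sum_support_decompose 𝒜 (v l)

/-- The decomposition of the graded free module. -/
noncomputable def hs5gpDecomp {n : ℕ} (e : Fin n → ℕ) :
    DirectSum.Decomposition (hs5gp 𝒜 e) := by
  classical
  refine
    { decompose' := fun v => ∑ N ∈ hs5Sv 𝒜 e v,
        DirectSum.of (fun N => hs5gp 𝒜 e N) N ⟨hs5piF 𝒜 e N v, hs5piF_mem 𝒜 e N v⟩,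
      left_inv := ?_, right_inv := ?_ }
  · intro v
    rw [map_sum]
    have : ∀ N ∈ hs5Sv 𝒜 e v,
        (DirectSum.coeAddMonoidHom (hs5gp 𝒜 e))
          (DirectSum.of (fun N => hs5gp 𝒜 e N) N ⟨hs5piF 𝒜 e N v, hs5piF_mem 𝒜 e N v⟩)
          = hs5piF 𝒜 e N v := fun N _ => DirectSum.coeAddMonoidHom_of _ _ _
    rw [Finset.sum_congr rfl this]
    exact hs5_sum_Sv 𝒜 e v
  · intro w
    apply DFinsupp.ext
    intro D
    set v : Fin n → R := DirectSum.coeAddMonoidHom (hs5gp 𝒜 e) w with hvdef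
    have hcomp : ((∑ N ∈ hs5Sv 𝒜 e v,
        DirectSum.of (fun N => hs5gp 𝒜 e N) N ⟨hs5piF 𝒜 e N v, hs5piF_mem 𝒜 e N v⟩) D
          : Fin n → R) = hs5piF 𝒜 e D v := by
      rw [DFinsupp.finset_sum_apply, AddSubmonoidClass.coe_finset_sum]
      rw [Finset.sum_eq_single D
        (fun N _ hN => by rw [DirectSum.of_eq_of_ne _ _ _ hN.symm]; rfl)
        (fun hD => by
          rw [DirectSum.of_eq_same]
          exact hs5piF_eq_zero_of_not_mem_Sv 𝒜 e hD)]
      rw [DirectSum.of_eq_same]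
    apply Subtype.ext
    rw [hcomp]
    have hv : v = ∑ N ∈ w.support, ((w N : Fin n → R)) := by
      rw [hvdef]
      conv_lhs => rw [← DirectSum.sum_support_of w]
      rw [map_sum]
      exact Finset.sum_congr rfl (fun N _ => DirectSum.coeAddMonoidHom_of _ _ _)
    rw [hv, map_sum]
    rw [Finset.sum_eq_single D
      (fun N _ hN => hs5piF_eq_zero 𝒜 e (w N).2 (Ne.symm hN))
      (fun hD => by
        rw [hs5piF_eq_self 𝒜 e (w D).2, DFinsupp.notMem_support_iff.mp hD]
        rfl)]
    exact hs5piF_eq_self 𝒜 e (w D).2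

lemma hs5gp_decompose_apply {n : ℕ} (e : Fin n → ℕ) (v : Fin n → R) (N : ℕ) :
    letI := hs5gpDecomp 𝒜 e
    (DirectSum.decompose (hs5gp 𝒜 e) v N : Fin n → R) = hs5piF 𝒜 e N v := by
  classical
  letI := hs5gpDecomp 𝒜 e
  have h0 : DirectSum.decompose (hs5gp 𝒜 e) v
      = ∑ N ∈ hs5Sv 𝒜 e v,
        DirectSum.of (fun N => hs5gp 𝒜 e N) N ⟨hs5piF 𝒜 e N v, hs5piF_mem 𝒜 e N v⟩ := rfl
  rw [h0, DFinsupp.finset_sum_apply, AddSubmonoidClass.coe_finset_sum]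
  rw [Finset.sum_eq_single N
    (fun D _ hD => by rw [DirectSum.of_eq_of_ne _ _ _ hD.symm]; rfl)
    (fun hN => by
      rw [DirectSum.of_eq_same]
      exact hs5piF_eq_zero_of_not_mem_Sv 𝒜 e hN)]
  rw [DirectSum.of_eq_same]

lemma hs5gp_smul {n : ℕ} (e : Fin n → ℕ) (i j : ℕ) (r : R) (v : Fin n → R)
    (hr : r ∈ 𝒜 i) (hv : v ∈ hs5gp 𝒜 e j) : r • v ∈ hs5gp 𝒜 e (i + j) := by
  rw [hs5_mem_gp_iff] at hv ⊢
  intro l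
  have hl := hv l
  have hsmul : (r • v) l = r * v l := rfl
  by_cases hj : e l ≤ j
  · have h1 : e l ≤ i + j := by omega
    rw [hs5_mem_AS_of_le 𝒜 h1, hsmul]
    have := SetLike.mul_mem_graded hr ((hs5_mem_AS_of_le 𝒜 hj).mp hl)
    convert this using 2
    omega
  · have hl2 := (hs5_mem_AS_of_not_le 𝒜 hj).mp hl
    by_cases h1 : e l ≤ i + j
    · rw [hs5_mem_AS_of_le 𝒜 h1, hsmul, hl2, mul_zero]
      exact Submodule.zero_mem _
    · rw [hs5_mem_AS_of_not_le 𝒜 h1, hsmul, hl2, mul_zero]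
end Free

section LC
variable {R : Type} [CommRing R]
variable {V : Type} [AddCommGroup V] [Module R V]

/-- Linear combination map from a free module. -/
noncomputable def hs5lc {m : ℕ} (g : Fin m → V) : (Fin m → R) →ₗ[R] V where
  toFun v := ∑ j, v j • g j
  map_add' a b := by
    simp only [Pi.add_apply, add_smul]
    rw [Finset.sum_add_distrib]
  map_smul' r a := by
    simp only [Pi.smul_apply, smul_eq_mul, RingHom.id_apply, Finset.smul_sum, mul_smul]

lemma hs5lc_apply {m : ℕ} (g : Fin m → V) (v : Fin m → R) :
    hs5lc g v = ∑ j, v j • g j := rfl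

lemma hs5lc_single {m : ℕ} (g : Fin m → V) (j : Fin m) :
    hs5lc g (Pi.single j (1 : R)) = g j := by
  classical
  rw [hs5lc_apply, Finset.sum_eq_single j
    (fun b _ hb => by rw [Pi.single_eq_of_ne hb, zero_smul])
    (fun h => absurd (Finset.mem_univ j) h)]
  rw [Pi.single_eq_same, one_smul]

lemma hs5lc_range {m : ℕ} (g : Fin m → V) :
    LinearMap.range (hs5lc g) = Submodule.span R (Set.range g) := by
  apply le_antisymm
  · rintro x ⟨v, rfl⟩
    rw [hs5lc_apply]
    exact Submodule.sum_mem _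
      (fun j _ => Submodule.smul_mem _ _ (Submodule.subset_span (Set.mem_range_self j)))
  · rw [Submodule.span_le]
    rintro x ⟨j, rfl⟩
    exact ⟨Pi.single j 1, hs5lc_single g j⟩

lemma hs5_single_eq_smul {m : ℕ} (u : Fin m → R) (j : Fin m) :
    Pi.single j (u j) = u j • (Pi.single j 1 : Fin m → R) := by
  classical
  funext l
  by_cases h : l = j
  · subst h
    rw [Pi.single_eq_same, Pi.smul_apply, Pi.single_eq_same, smul_eq_mul, mul_one]
  · rw [Pi.single_eq_of_ne h, Pi.smul_apply, Pi.single_eq_of_ne h, smul_eq_mul, mul_zero]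

lemma hs5_apply_eq_sum {m : ℕ} (φ : (Fin m → R) →ₗ[R] V) (u : Fin m → R) :
    φ u = ∑ j, u j • φ (Pi.single j 1) := by
  classical
  conv_lhs => rw [← Finset.univ_sum_single u, map_sum]
  refine Finset.sum_congr rfl (fun j _ => ?_)
  rw [hs5_single_eq_smul u j, map_smul]
end LC

section Maps
variable {k : Type} [Field k] {R : Type} [CommRing R] [Algebra k R]
variable (𝒜 : ℕ → Submodule k R) [GradedAlgebra 𝒜]
variable {V : Type} [AddCommGroup V] [Module k V] [Module R V] [IsScalarTower k R V]
variable (𝒱 : ℕ → Submodule k V)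

lemma hs5_map_gp {m : ℕ} {e' : Fin m → ℕ}
    (hsm : ∀ (i j : ℕ) (r : R) (v : V), r ∈ 𝒜 i → v ∈ 𝒱 j → r • v ∈ 𝒱 (i + j))
    (φ : (Fin m → R) →ₗ[R] V) (hcols : ∀ j, φ (Pi.single j 1) ∈ 𝒱 (e' j))
    {D : ℕ} {u : Fin m → R} (hu : u ∈ hs5gp 𝒜 e' D) : φ u ∈ 𝒱 D := by
  rw [hs5_apply_eq_sum]
  refine Submodule.sum_mem _ (fun j _ => ?_)
  have hl := (hs5_mem_gp_iff 𝒜 e' D u).mp hu j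
  by_cases h : e' j ≤ D
  · have h2 := hsm (D - e' j) (e' j) _ _ ((hs5_mem_AS_of_le 𝒜 h).mp hl) (hcols j)
    rwa [Nat.sub_add_cancel h] at h2
  · rw [(hs5_mem_AS_of_not_le 𝒜 h).mp hl, zero_smul]
    exact Submodule.zero_mem _

lemma hs5_comm [DirectSum.Decomposition 𝒱] {m : ℕ} {e' : Fin m → ℕ}
    (hsm : ∀ (i j : ℕ) (r : R) (v : V), r ∈ 𝒜 i → v ∈ 𝒱 j → r • v ∈ 𝒱 (i + j))
    (φ : (Fin m → R) →ₗ[R] V) (hcols : ∀ j, φ (Pi.single j 1) ∈ 𝒱 (e' j))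
    (v : Fin m → R) (N : ℕ) :
    φ (hs5piF 𝒜 e' N v) = (DirectSum.decompose 𝒱 (φ v) N : V) := by
  classical
  letI := hs5gpDecomp 𝒜 e'
  rw [← hs5gp_decompose_apply 𝒜 e' v N]
  have hv : v = ∑ D ∈ (DirectSum.decompose (hs5gp 𝒜 e') v).support,
      (DirectSum.decompose (hs5gp 𝒜 e') v D : Fin m → R) :=
    (DirectSum.sum_support_decompose _ v).symm
  conv_rhs => rw [hv, map_sum, DirectSum.decompose_sum, DFinsupp.finset_sum_apply,
    AddSubmonoidClass.coe_finset_sum]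
  rw [Finset.sum_eq_single N
    (fun D _ hD => DirectSum.decompose_of_mem_ne 𝒱
      (hs5_map_gp 𝒜 𝒱 hsm φ hcols (DirectSum.decompose (hs5gp 𝒜 e') v D).2) hD)
    (fun hN => by
      rw [DFinsupp.notMem_support_iff.mp hN]
      simp)]
  rw [DirectSum.decompose_of_mem_same 𝒱
    (hs5_map_gp 𝒜 𝒱 hsm φ hcols (DirectSum.decompose (hs5gp 𝒜 e') v N).2)]
end Maps

section Step
variable {k : Type} [Field k] {R : Type} [CommRing R] [Algebra k R]
variable (𝒜 : ℕ → Submodule k R) [GradedAlgebra 𝒜]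

set_option maxHeartbeats 1000000 in
lemma hs5_STEP [IsNoetherianRing R]
    (hconn : ∀ r ∈ 𝒜 0, ∃ c : k, r = algebraMap k R c)
    {n : ℕ} (e : Fin n → ℕ) (K : Submodule R (Fin n → R))
    (hKgr : ∀ v ∈ K, ∀ N, hs5piF 𝒜 e N v ∈ K)
    (hKmin : ∀ v ∈ K, ∀ l, (DirectSum.decompose 𝒜 (v l) 0 : R) = 0) :
    ∃ (n' : ℕ) (e' : Fin n' → ℕ) (φ : (Fin n' → R) →ₗ[R] (Fin n → R)),
      LinearMap.range φ = K ∧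
      (∀ j, φ (Pi.single j 1) ∈ hs5gp 𝒜 e (e' j)) ∧
      (∀ j, ∃ l, e l < e' j) ∧
      (∀ v ∈ LinearMap.ker φ, ∀ N, hs5piF 𝒜 e' N v ∈ LinearMap.ker φ) ∧
      (∀ v ∈ LinearMap.ker φ, ∀ l, (DirectSum.decompose 𝒜 (v l) 0 : R) = 0) := by
  classical
  letI := hs5gpDecomp 𝒜 e
  have hKgr' : ∀ v ∈ K, ∀ N, (DirectSum.decompose (hs5gp 𝒜 e) v N : Fin n → R) ∈ K := by
    intro v hv N
    rw [hs5gp_decompose_apply 𝒜 e v N]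
    exact hKgr v hv N
  obtain ⟨n', e', g, hspan, hhom, hgne, hmin⟩ :=
    hs5_GEN 𝒜 (hs5gp 𝒜 e) hconn (hs5gp_smul 𝒜 e) K (IsNoetherian.noetherian K) hKgr'
  have hgK : ∀ j, g j ∈ K := by
    intro j
    rw [← hspan]
    exact Submodule.subset_span (Set.mem_range_self j)
  refine ⟨n', e', hs5lc g, ?_, ?_, ?_, ?_, ?_⟩
  · rw [hs5lc_range]; exact hspan
  · intro j; rw [hs5lc_single]; exact hhom j
  · intro j
    have hne0 : ∃ l, g j l ≠ 0 := by
      by_contra hc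
      push_neg at hc
      exact hgne j (funext hc)
    obtain ⟨l, hl⟩ := hne0
    refine ⟨l, ?_⟩
    have hmem := (hs5_mem_gp_iff 𝒜 e (e' j) (g j)).mp (hhom j) l
    by_cases h : e l ≤ e' j
    · have h2 := (hs5_mem_AS_of_le 𝒜 h).mp hmem
      rcases Nat.lt_or_ge (e l) (e' j) with h3 | h3
      · exact h3
      · exfalso
        have h4 : e' j - e l = 0 := by omega
        rw [h4] at h2
        have h5 := hKmin (g j) (hgK j) l
        rw [DirectSum.decompose_of_mem_same 𝒜 h2] at h5
        exact hl h5
    · exact absurd ((hs5_mem_AS_of_not_le 𝒜 h).mp hmem) hl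
  · intro v hv N
    rw [LinearMap.mem_ker] at hv ⊢
    have hcols : ∀ j, hs5lc g (Pi.single j (1 : R)) ∈ hs5gp 𝒜 e (e' j) := by
      intro j; rw [hs5lc_single]; exact hhom j
    rw [hs5_comm 𝒜 (hs5gp 𝒜 e) (hs5gp_smul 𝒜 e) (hs5lc g) hcols v N, hv]
    simp
  · intro v hv l
    rw [LinearMap.mem_ker, hs5lc_apply] at hv
    exact hmin v hv l
end Step

section Rank
variable {k : Type} [Field k] {R : Type} [CommRing R] [Algebra k R]
variable (𝒜 : ℕ → Submodule k R) [GradedAlgebra 𝒜]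

/-- The graded piece of a free module is the product of shifted pieces of `R`. -/
noncomputable def hs5gpEquiv {n : ℕ} (e : Fin n → ℕ) (N : ℕ) :
    hs5gp 𝒜 e N ≃ₗ[k] Π l, hs5AS 𝒜 (e l) N where
  toFun v := fun l => ⟨v.1 l, (hs5_mem_gp_iff 𝒜 e N v.1).mp v.2 l⟩
  invFun w := ⟨fun l => w l, (hs5_mem_gp_iff 𝒜 e N _).mpr (fun l => (w l).2)⟩
  map_add' a b := rfl
  map_smul' c a := rfl
  left_inv v := rfl
  right_inv w := rfl

lemma hs5_findim_AS [IsNoetherianRing R]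
    (hconn : ∀ r ∈ 𝒜 0, ∃ c : k, r = algebraMap k R c) (d N : ℕ) :
    FiniteDimensional k (hs5AS 𝒜 d N) := by
  by_cases h : d ≤ N
  · rw [show hs5AS 𝒜 d N = 𝒜 (N - d) from if_pos h]
    exact hs5_findim 𝒜 hconn _
  · rw [show hs5AS 𝒜 d N = ⊥ from if_neg h]
    infer_instance

lemma hs5_findim_gp [IsNoetherianRing R]
    (hconn : ∀ r ∈ 𝒜 0, ∃ c : k, r = algebraMap k R c) {n : ℕ} (e : Fin n → ℕ) (N : ℕ) :
    FiniteDimensional k (hs5gp 𝒜 e N) := by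
  haveI : ∀ l, FiniteDimensional k (hs5AS 𝒜 (e l) N) := fun l => hs5_findim_AS 𝒜 hconn _ _
  exact Module.Finite.equiv (hs5gpEquiv 𝒜 e N).symm

lemma hs5_finrank_gp_eq [IsNoetherianRing R]
    (hconn : ∀ r ∈ 𝒜 0, ∃ c : k, r = algebraMap k R c) {n : ℕ} (e : Fin n → ℕ) (N : ℕ) :
    (Module.finrank k (hs5gp 𝒜 e N) : ℤ)
      = ∑ p ∈ Finset.range (N + 1), (Module.finrank k (𝒜 p) : ℤ) *
          ((Finset.univ.filter (fun j : Fin n => e j = N - p)).card : ℤ) := by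
  classical
  haveI : ∀ l, FiniteDimensional k (hs5AS 𝒜 (e l) N) := fun l => hs5_findim_AS 𝒜 hconn _ _
  have h1 : Module.finrank k (hs5gp 𝒜 e N) = ∑ l, Module.finrank k (hs5AS 𝒜 (e l) N) := by
    rw [LinearEquiv.finrank_eq (hs5gpEquiv 𝒜 e N)]
    exact Module.finrank_pi_fintype k
  have h2 : ∀ l : Fin n, (Module.finrank k (hs5AS 𝒜 (e l) N) : ℤ)
      = if e l ≤ N then (Module.finrank k (𝒜 (N - e l)) : ℤ) else 0 := by
    intro l
    by_cases h : e l ≤ N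
    · rw [if_pos h, hs5AS, if_pos h]
    · rw [if_neg h, hs5AS, if_neg h, finrank_bot]
      rfl
  have h3 : (Module.finrank k (hs5gp 𝒜 e N) : ℤ)
      = ∑ l, if e l ≤ N then (Module.finrank k (𝒜 (N - e l)) : ℤ) else 0 := by
    rw [h1]
    push_cast
    exact Finset.sum_congr rfl (fun l _ => h2 l)
  rw [h3]
  have h4 : ∀ p ∈ Finset.range (N + 1), (Module.finrank k (𝒜 p) : ℤ) *
      ((Finset.univ.filter (fun j : Fin n => e j = N - p)).card : ℤ)
      = ∑ j : Fin n, if e j = N - p then (Module.finrank k (𝒜 p) : ℤ) else 0 := by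
    intro p _
    rw [← Finset.sum_filter, Finset.sum_const, nsmul_eq_mul, mul_comm]
  have h5 : ∀ j : Fin n, (∑ p ∈ Finset.range (N + 1),
      if e j = N - p then (Module.finrank k (𝒜 p) : ℤ) else 0)
      = if e j ≤ N then (Module.finrank k (𝒜 (N - e j)) : ℤ) else 0 := by
    intro j
    by_cases h : e j ≤ N
    · rw [if_pos h]
      rw [Finset.sum_eq_single (N - e j)
        (fun p hp hne => by
          rw [Finset.mem_range] at hp
          rw [if_neg (by omega)])
        (fun hc => absurd (Finset.mem_range.mpr (by omega)) hc)]
      rw [if_pos (by omega)]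
    · rw [if_neg h]
      refine Finset.sum_eq_zero (fun p hp => ?_)
      rw [Finset.mem_range] at hp
      rw [if_neg (by omega)]
  calc (∑ l : Fin n, if e l ≤ N then (Module.finrank k (𝒜 (N - e l)) : ℤ) else 0)
      = ∑ j : Fin n, ∑ p ∈ Finset.range (N + 1),
          if e j = N - p then (Module.finrank k (𝒜 p) : ℤ) else 0 :=
        (Finset.sum_congr rfl (fun j _ => (h5 j).symm))
    _ = ∑ p ∈ Finset.range (N + 1), ∑ j : Fin n,
          if e j = N - p then (Module.finrank k (𝒜 p) : ℤ) else 0 := Finset.sum_comm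
    _ = _ := (Finset.sum_congr rfl (fun p hp => (h4 p hp).symm))

lemma hs5_finrank_inf_add_map {V W : Type} [AddCommGroup V] [Module k V]
    [AddCommGroup W] [Module k W]
    (f : V →ₗ[k] W) (A : Submodule k V) [FiniteDimensional k A] :
    Module.finrank k A
      = Module.finrank k ((LinearMap.ker f ⊓ A : Submodule k V))
        + Module.finrank k (A.map f) := by
  have h := LinearMap.finrank_range_add_finrank_ker (f ∘ₗ A.subtype)
  rw [LinearMap.range_comp, Submodule.range_subtype, LinearMap.ker_comp] at h
  have h2 : Submodule.comap A.subtype (LinearMap.ker f)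
      = Submodule.comap A.subtype (LinearMap.ker f ⊓ A) := by
    rw [Submodule.comap_inf, Submodule.comap_subtype_self, inf_top_eq]
  rw [h2] at h
  have h3 := LinearEquiv.finrank_eq
    (Submodule.comapSubtypeEquivOfLe (inf_le_right : LinearMap.ker f ⊓ A ≤ A))
  omega

lemma hs5_telescope (f g : ℕ → ℤ) (dM : ℤ) (h0 : f 0 = g 0 + dM)
    (hs : ∀ i, f (i + 1) = g (i + 1) + g i) (N : ℕ) :
    ∑ i ∈ Finset.range (N + 1), (-1 : ℤ) ^ i * f i = dM + (-1) ^ N * g N := by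
  induction N with
  | zero => rw [Finset.sum_range_one, h0]; ring
  | succ N IH => rw [Finset.sum_range_succ, IH, hs N]; ring

end Rank



set_option synthInstance.maxHeartbeats 1000000 in
set_option maxHeartbeats 1000000 in
/-- **Equivariant Hilbert–Serre-type identity (non-equivariant form).**
Let `R` be a commutative `ℕ`-graded connected Noetherian `k`-algebra and `M` a finitely
generated `ℕ`-graded `R`-module.  Then `Hilb(M,t) = Hilb(R,t) · Σᵢ (-1)ⁱ Hilb(Torᵢᴿ(M,k),t)`
in `ℤ[[t]]`.  Here `Torᵢᴿ(M,k)` is computed (with its internal grading) from a *minimal*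
graded free resolution `F` of `M`: its Hilbert series is `Σⱼ t^{e i j}` where `e i j` are the
degrees of the basis vectors of `Fᵢ`; minimality means all matrix entries of the
differentials lie in `R₊`.  The minimal degrees of the `Fᵢ` strictly increase, so each
coefficient of the alternating sum involves only finitely many terms: the coefficient of
`t^N` only involves `i ≤ N`, which is how the identity is stated below. -/
theorem stmt_5 (k : Type) [Field k] (R : Type) [CommRing R] [Algebra k R]
    (𝒜 : ℕ → Submodule k R) [GradedAlgebra 𝒜] [IsNoetherianRing R]
    (hconn : ∀ r ∈ 𝒜 0, ∃ c : k, r = algebraMap k R c)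
    (M : Type) [AddCommGroup M] [Module k M] [Module R M] [IsScalarTower k R M]
    [Module.Finite R M]
    (ℳ : ℕ → Submodule k M)
    (hdecomp : DirectSum.IsInternal ℳ)
    (hgsmul : ∀ (i j : ℕ) (r : R) (m : M), r ∈ 𝒜 i → m ∈ ℳ j → r • m ∈ ℳ (i + j)) :
    ∃ (n : ℕ → ℕ) (e : ∀ i, Fin (n i) → ℕ)
      (d : ∀ i : ℕ, ((Fin (n (i + 1)) → R) →ₗ[R] (Fin (n i) → R)))
      (ε : (Fin (n 0) → R) →ₗ[R] M),
      -- a graded free resolution of `M` ...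
      Function.Surjective ε ∧
      LinearMap.ker ε = LinearMap.range (d 0) ∧
      (∀ i : ℕ, LinearMap.ker (d i) = LinearMap.range (d (i + 1))) ∧
      (∀ j : Fin (n 0), ε (Pi.single j 1) ∈ ℳ (e 0 j)) ∧
      (∀ (i : ℕ) (j : Fin (n (i + 1))) (l : Fin (n i)),
        d i (Pi.single j 1) l = 0 ∨
          ∃ c : ℕ, e (i + 1) j = e i l + c ∧ d i (Pi.single j 1) l ∈ 𝒜 c) ∧
      -- ... which is minimal (differential entries have vanishing degree-zero component),
      (∀ (i : ℕ) (j : Fin (n (i + 1))) (l : Fin (n i)),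
        (DirectSum.decompose 𝒜 (d i (Pi.single j 1) l) 0 : R) = 0) ∧
      -- with strictly increasing minimal degrees (which gives convergence), and
      (∀ (i : ℕ) (j : Fin (n (i + 1))), ∃ l : Fin (n i), e i l < e (i + 1) j) ∧
      -- the Hilbert series identity, coefficient by coefficient:
      -- `dim M_N = Σ_{p+q=N} dim R_p · (Σ_i (-1)^i #{j | e i j = q})`
      (∀ N : ℕ,
        (Module.finrank k (ℳ N) : ℤ) =
          ∑ p ∈ Finset.range (N + 1), (Module.finrank k (𝒜 p) : ℤ) *
            (∑ i ∈ Finset.range (N + 1), (-1) ^ i *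
              ((Finset.univ.filter (fun j : Fin (n i) => e i j = N - p)).card : ℤ))) := by
  classical
  letI : DirectSum.Decomposition ℳ := hdecomp.chooseDecomposition ℳ
  obtain ⟨n0, e0, g0, hspan0, hhom0, hgne0, hmin0⟩ :=
    hs5_GEN 𝒜 ℳ hconn hgsmul ⊤ Module.Finite.fg_top (fun v _ N => Submodule.mem_top)
  set ε : (Fin n0 → R) →ₗ[R] M := hs5lc g0 with hεdef
  have hεcols : ∀ j, ε (Pi.single j (1 : R)) ∈ ℳ (e0 j) := by
    intro j
    rw [hεdef, hs5lc_single]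
    exact hhom0 j
  have hεrange : LinearMap.range ε = ⊤ := by
    rw [hεdef, hs5lc_range, hspan0]
  have hεsurj : Function.Surjective ε := LinearMap.range_eq_top.mp hεrange
  have hK0gr : ∀ v ∈ LinearMap.ker ε, ∀ N, hs5piF 𝒜 e0 N v ∈ LinearMap.ker ε := by
    intro v hv N
    rw [LinearMap.mem_ker] at hv ⊢
    rw [hs5_comm 𝒜 ℳ hgsmul ε hεcols v N, hv]
    simp
  have hK0min : ∀ v ∈ LinearMap.ker ε, ∀ l,
      (DirectSum.decompose 𝒜 (v l) 0 : R) = 0 := by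
    intro v hv l
    rw [LinearMap.mem_ker, hεdef, hs5lc_apply] at hv
    exact hmin0 v hv l
  have STEP : ∀ (p : Σ n : ℕ, (Fin n → ℕ) × Submodule R (Fin n → R)),
      (∀ v ∈ p.2.2, ∀ N, hs5piF 𝒜 p.2.1 N v ∈ p.2.2) →
      (∀ v ∈ p.2.2, ∀ l, (DirectSum.decompose 𝒜 (v l) 0 : R) = 0) →
      ∃ (p' : Σ n : ℕ, (Fin n → ℕ) × Submodule R (Fin n → R))
        (φ : (Fin p'.1 → R) →ₗ[R] (Fin p.1 → R)),
        LinearMap.range φ = p.2.2 ∧ LinearMap.ker φ = p'.2.2 ∧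
        (∀ j, φ (Pi.single j 1) ∈ hs5gp 𝒜 p.2.1 (p'.2.1 j)) ∧
        (∀ j, ∃ l, p.2.1 l < p'.2.1 j) ∧
        (∀ v ∈ p'.2.2, ∀ N, hs5piF 𝒜 p'.2.1 N v ∈ p'.2.2) ∧
        (∀ v ∈ p'.2.2, ∀ l, (DirectSum.decompose 𝒜 (v l) 0 : R) = 0) := by
    rintro ⟨n1, e1, K⟩ hgr hmin
    obtain ⟨n', e', φ, h1, h2, h3, h4, h5⟩ := hs5_STEP 𝒜 hconn e1 K hgr hmin
    exact ⟨⟨n', e', LinearMap.ker φ⟩, φ, h1, rfl, h2, h3, h4, h5⟩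
  choose nxt φf hr1 hr2 hr3 hr4 hr5 hr6 using STEP
  let u : ℕ → {p : Σ n : ℕ, (Fin n → ℕ) × Submodule R (Fin n → R) //
      (∀ v ∈ p.2.2, ∀ N, hs5piF 𝒜 p.2.1 N v ∈ p.2.2) ∧
      (∀ v ∈ p.2.2, ∀ l, (DirectSum.decompose 𝒜 (v l) 0 : R) = 0)} :=
    fun i => Nat.rec
      ⟨⟨n0, e0, LinearMap.ker ε⟩, hK0gr, hK0min⟩
      (fun _ pr => ⟨nxt pr.1 pr.2.1 pr.2.2, hr5 pr.1 pr.2.1 pr.2.2, hr6 pr.1 pr.2.1 pr.2.2⟩) i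
  let nn : ℕ → ℕ := fun i => (u i).1.1
  let ee : ∀ i, Fin (nn i) → ℕ := fun i => (u i).1.2.1
  let KK : ∀ i, Submodule R (Fin (nn i) → R) := fun i => (u i).1.2.2
  let dd : ∀ i, (Fin (nn (i + 1)) → R) →ₗ[R] (Fin (nn i) → R) :=
    fun i => φf (u i).1 (u i).2.1 (u i).2.2
  have hrange : ∀ i, LinearMap.range (dd i) = KK i := fun i => hr1 (u i).1 (u i).2.1 (u i).2.2
  have hker : ∀ i, LinearMap.ker (dd i) = KK (i + 1) := fun i => hr2 (u i).1 (u i).2.1 (u i).2.2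
  have hcols : ∀ i j, dd i (Pi.single j 1) ∈ hs5gp 𝒜 (ee i) (ee (i + 1) j) :=
    fun i => hr3 (u i).1 (u i).2.1 (u i).2.2
  have hdeg : ∀ i j, ∃ l, ee i l < ee (i + 1) j := fun i => hr4 (u i).1 (u i).2.1 (u i).2.2
  have hKgr : ∀ i, ∀ v ∈ KK i, ∀ N, hs5piF 𝒜 (ee i) N v ∈ KK i := fun i => (u i).2.1
  have hKmin : ∀ i, ∀ v ∈ KK i, ∀ l, (DirectSum.decompose 𝒜 (v l) 0 : R) = 0 :=
    fun i => (u i).2.2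
  have hK0 : KK 0 = LinearMap.ker ε := rfl
  have hEmin : ∀ i j, i ≤ ee i j := by
    intro i
    induction i with
    | zero => intro j; exact Nat.zero_le _
    | succ i IH =>
        intro j
        obtain ⟨l, hl⟩ := hdeg i j
        have := IH l
        omega
  refine ⟨nn, ee, dd, ε, hεsurj, ?_, ?_, hεcols, ?_, ?_, hdeg, ?_⟩
  · rw [hrange 0, hK0]
  · intro i
    rw [hker i, hrange (i + 1)]
  · intro i j l
    have h := (hs5_mem_gp_iff 𝒜 (ee i) (ee (i + 1) j) _).mp (hcols i j) l
    by_cases hle : ee i l ≤ ee (i + 1) j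
    · right
      exact ⟨ee (i + 1) j - ee i l, by omega, (hs5_mem_AS_of_le 𝒜 hle).mp h⟩
    · left
      exact (hs5_mem_AS_of_not_le 𝒜 hle).mp h
  · intro i j l
    have hmem : dd i (Pi.single j 1) ∈ KK i := by
      rw [← hrange i]
      exact ⟨Pi.single j 1, rfl⟩
    exact hKmin i _ hmem l
  · -- the Hilbert series identity
    intro N
    haveI hfgp : ∀ (m : ℕ) (e : Fin m → ℕ), FiniteDimensional k (hs5gp 𝒜 e N) :=
      fun m e => hs5_findim_gp 𝒜 hconn e N
    -- dimension of the degree-N part of the i-th free module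
    set fnum : ℕ → ℤ := fun i => (Module.finrank k (hs5gp 𝒜 (ee i) N) : ℤ) with hfnumdef
    set gnum : ℕ → ℤ := fun i => (Module.finrank k
      ((KK i).restrictScalars k ⊓ hs5gp 𝒜 (ee i) N : Submodule k (Fin (nn i) → R)) : ℤ)
      with hgnumdef
    -- stage-0 rank--nullity
    have hstage0 : fnum 0 = gnum 0 + (Module.finrank k (ℳ N) : ℤ) := by
      have hrn := hs5_finrank_inf_add_map (LinearMap.restrictScalars k ε) (hs5gp 𝒜 e0 N)
      have hkerε : LinearMap.ker (LinearMap.restrictScalars k ε)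
          = (LinearMap.ker ε).restrictScalars k := LinearMap.ker_restrictScalars k ε
      have hmap : (hs5gp 𝒜 e0 N).map (LinearMap.restrictScalars k ε) = ℳ N := by
        apply le_antisymm
        · rintro x ⟨v, hv, rfl⟩
          exact hs5_map_gp 𝒜 ℳ hgsmul ε hεcols hv
        · intro m hm
          obtain ⟨v, rfl⟩ := hεsurj m
          refine ⟨hs5piF 𝒜 e0 N v, hs5piF_mem 𝒜 e0 N v, ?_⟩
          show ε (hs5piF 𝒜 e0 N v) = ε v
          rw [hs5_comm 𝒜 ℳ hgsmul ε hεcols v N]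
          exact DirectSum.decompose_of_mem_same ℳ hm
      rw [hkerε, hmap] at hrn
      show (Module.finrank k (hs5gp 𝒜 e0 N) : ℤ)
        = (Module.finrank k ((LinearMap.ker ε).restrictScalars k ⊓ hs5gp 𝒜 e0 N :
            Submodule k (Fin n0 → R)) : ℤ) + (Module.finrank k (ℳ N) : ℤ)
      exact_mod_cast hrn
    have hstep : ∀ i, fnum (i + 1) = gnum (i + 1) + gnum i := by
      intro i
      letI := hs5gpDecomp 𝒜 (ee i)
      have hrn := hs5_finrank_inf_add_map (LinearMap.restrictScalars k (dd i))
        (hs5gp 𝒜 (ee (i + 1)) N)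
      have hkerd : LinearMap.ker (LinearMap.restrictScalars k (dd i))
          = (KK (i + 1)).restrictScalars k := by
        rw [LinearMap.ker_restrictScalars, hker i]
      have hmap : (hs5gp 𝒜 (ee (i + 1)) N).map (LinearMap.restrictScalars k (dd i))
          = (KK i).restrictScalars k ⊓ hs5gp 𝒜 (ee i) N := by
        apply le_antisymm
        · rintro x ⟨v, hv, rfl⟩
          constructor
          · show dd i v ∈ KK i
            rw [← hrange i]
            exact ⟨v, rfl⟩
          · exact hs5_map_gp 𝒜 (hs5gp 𝒜 (ee i)) (hs5gp_smul 𝒜 (ee i)) (dd i) (hcols i) hv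
        · rintro w ⟨hw1, hw2⟩
          have hw1' : w ∈ KK i := hw1
          rw [← hrange i] at hw1'
          obtain ⟨v, rfl⟩ := hw1'
          refine ⟨hs5piF 𝒜 (ee (i + 1)) N v, hs5piF_mem _ _ _ _, ?_⟩
          show dd i (hs5piF 𝒜 (ee (i + 1)) N v) = dd i v
          rw [hs5_comm 𝒜 (hs5gp 𝒜 (ee i)) (hs5gp_smul 𝒜 (ee i)) (dd i) (hcols i) v N,
            hs5gp_decompose_apply 𝒜 (ee i) (dd i v) N]
          exact hs5piF_eq_self 𝒜 (ee i) hw2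
      rw [hkerd, hmap] at hrn
      simp only [hfnumdef, hgnumdef]
      exact_mod_cast hrn
    have hgN : gnum N = 0 := by
      have hbot : (KK N).restrictScalars k ⊓ hs5gp 𝒜 (ee N) N
          = (⊥ : Submodule k (Fin (nn N) → R)) := by
        rw [eq_bot_iff]
        rintro w ⟨hw1, hw2⟩
        have hw1' : w ∈ KK N := hw1
        rw [← hrange N] at hw1'
        obtain ⟨v, rfl⟩ := hw1'
        have hpi0 : hs5piF 𝒜 (ee (N + 1)) N v = 0 := by
          funext l
          rw [hs5piF_apply, if_neg (by have := hEmin (N + 1) l; omega)]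
          rfl
        have h1 : dd N v = hs5piF 𝒜 (ee N) N (dd N v) :=
          (hs5piF_eq_self 𝒜 (ee N) hw2).symm
        have h2 : dd N (hs5piF 𝒜 (ee (N + 1)) N v) = hs5piF 𝒜 (ee N) N (dd N v) := by
          letI := hs5gpDecomp 𝒜 (ee N)
          rw [hs5_comm 𝒜 (hs5gp 𝒜 (ee N)) (hs5gp_smul 𝒜 (ee N)) (dd N) (hcols N) v N,
            hs5gp_decompose_apply 𝒜 (ee N) (dd N v) N]
        show dd N v ∈ (⊥ : Submodule k (Fin (nn N) → R))
        rw [Submodule.mem_bot, h1, ← h2, hpi0, map_zero]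
      simp only [hgnumdef]
      rw [hbot]
      simp
    have htel := hs5_telescope fnum gnum (Module.finrank k (ℳ N) : ℤ) hstage0 hstep N
    rw [hgN, mul_zero, add_zero] at htel
    have hfe : ∀ i, fnum i = ∑ p ∈ Finset.range (N + 1), (Module.finrank k (𝒜 p) : ℤ) *
        ((Finset.univ.filter (fun j : Fin (nn i) => ee i j = N - p)).card : ℤ) := by
      intro i
      simp only [hfnumdef]
      exact hs5_finrank_gp_eq 𝒜 hconn (ee i) N
    calc (Module.finrank k (ℳ N) : ℤ)
        = ∑ i ∈ Finset.range (N + 1), (-1 : ℤ) ^ i * fnum i := htel.symm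
      _ = ∑ i ∈ Finset.range (N + 1), ∑ p ∈ Finset.range (N + 1),
            (-1 : ℤ) ^ i * ((Module.finrank k (𝒜 p) : ℤ) *
              ((Finset.univ.filter (fun j : Fin (nn i) => ee i j = N - p)).card : ℤ)) := by
          refine Finset.sum_congr rfl (fun i _ => ?_)
          rw [hfe i, Finset.mul_sum]
      _ = ∑ p ∈ Finset.range (N + 1), ∑ i ∈ Finset.range (N + 1),
            (-1 : ℤ) ^ i * ((Module.finrank k (𝒜 p) : ℤ) *
              ((Finset.univ.filter (fun j : Fin (nn i) => ee i j = N - p)).card : ℤ)) :=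
          Finset.sum_comm
      _ = _ := by
          refine Finset.sum_congr rfl (fun p _ => ?_)
          rw [Finset.mul_sum]
          refine Finset.sum_congr rfl (fun i _ => ?_)
          ring
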